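/- For all x > 0 and y ∈ [0,1] such that exp(J(x,y))·y < 1, one has x = f_BCS(exp(J(x,y))·y) · exp(−J(x,y)). -/

import Mathlib

open Real MeasureTheory Set

noncomputable section

/-- The two-dimensional density of states `N₀(ε)`, extended evenly to `(-4,4)`
and by `0` outside. -/
def N0 (ε : ℝ) : ℝ :=
  if |ε| < 4 then
    (Real.pi ^ 2)⁻¹ * ∫ u in (-2:ℝ)..(2 - |ε|),
      (Real.sqrt (4 - u ^ 2) * Real.sqrt (4 - (u + |ε|) ^ 2))⁻¹
  else 0

/-- The three-dimensional density of states `N_{t_z}(ε)`. -/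
def N3 (tz ε : ℝ) : ℝ :=
  Real.pi⁻¹ * ∫ u in (-2:ℝ)..2, N0 (tz * u + ε) / Real.sqrt (4 - u ^ 2)

/-- `tanh (x / y)` with the convention that it equals `1` when `y = 0`. -/
def thQ (x y : ℝ) : ℝ := if y = 0 then 1 else Real.tanh (x / y)

/-- The tight-binding band relation of the anisotropic 3D model. -/
def bandE (tz k₁ k₂ k₃ : ℝ) : ℝ :=
  -2 * (Real.cos k₁ + Real.cos k₂) - 2 * tz * Real.cos k₃

/-- The integrand of the Néel-temperature equation, interpreted as `U/(4T)` where the band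
relation vanishes. -/
def neelIntegrand (U tz T k₁ k₂ k₃ : ℝ) : ℝ :=
  if bandE tz k₁ k₂ k₃ = 0 then U / (4 * T)
  else U * Real.tanh (bandE tz k₁ k₂ k₃ / (2 * T)) / (2 * bandE tz k₁ k₂ k₃)

/-- The equation characterizing the Néel temperature of the anisotropic 3D model. -/
def neelEq (U tz T : ℝ) : Prop :=
  1 = (∫ k₁ in (-Real.pi)..Real.pi, ∫ k₂ in (-Real.pi)..Real.pi,
        ∫ k₃ in (-Real.pi)..Real.pi, neelIntegrand U tz T k₁ k₂ k₃) / (2 * Real.pi) ^ 3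

/-- The antiferromagnetic mean-field (gap) equation of the anisotropic 3D model. -/
def gapEq (U tz T Δ : ℝ) : Prop :=
  1 = (∫ k₁ in (-Real.pi)..Real.pi, ∫ k₂ in (-Real.pi)..Real.pi,
        ∫ k₃ in (-Real.pi)..Real.pi,
          U * thQ (Real.sqrt (Δ ^ 2 + bandE tz k₁ k₂ k₃ ^ 2)) (2 * T)
            / (2 * Real.sqrt (Δ ^ 2 + bandE tz k₁ k₂ k₃ ^ 2))) / (2 * Real.pi) ^ 3

/-- The 2D band relation. -/
def bandE2 (k₁ k₂ : ℝ) : ℝ := -2 * (Real.cos k₁ + Real.cos k₂)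

/-- The equation characterizing the 2D Néel temperature. -/
def neelEq2 (U T : ℝ) : Prop :=
  1 = (∫ k₁ in (-Real.pi)..Real.pi, ∫ k₂ in (-Real.pi)..Real.pi,
        (if bandE2 k₁ k₂ = 0 then U / (4 * T)
         else U * Real.tanh (bandE2 k₁ k₂ / (2 * T)) / (2 * bandE2 k₁ k₂))) / (2 * Real.pi) ^ 2

/-- The 2D antiferromagnetic mean-field (gap) equation. -/
def gapEq2 (U T Δ : ℝ) : Prop :=
  1 = (∫ k₁ in (-Real.pi)..Real.pi, ∫ k₂ in (-Real.pi)..Real.pi,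
        U * thQ (Real.sqrt (Δ ^ 2 + bandE2 k₁ k₂ ^ 2)) (2 * T)
          / (2 * Real.sqrt (Δ ^ 2 + bandE2 k₁ k₂ ^ 2))) / (2 * Real.pi) ^ 2

/-- The BCS-type function `J(x,y)`. -/
def Jfun (x y : ℝ) : ℝ :=
  ∫ ε in Set.Ioi (0:ℝ),
    (thQ (Real.sqrt (x ^ 2 + ε ^ 2)) (2 * y) / Real.sqrt (x ^ 2 + ε ^ 2)
      - Real.tanh (ε / 2) / ε)

/-- `f` is the BCS gap-ratio function: for every `y ∈ [0,1)`, `f y` is the unique positive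
solution `x` of `J(x,y) = 0`. -/
def IsBCS (f : ℝ → ℝ) : Prop :=
  ∀ y ∈ Set.Ico (0:ℝ) 1,
    0 < f y ∧ Jfun (f y) y = 0 ∧ ∀ x, 0 < x → Jfun x y = 0 → x = f y


open Filter

lemma myTanh_lt_one (t : ℝ) : Real.tanh t < 1 := by
  rw [Real.tanh_eq_sinh_div_cosh, div_lt_one (Real.cosh_pos t)]
  exact Real.sinh_lt_cosh t

lemma myTanh_nonneg {t : ℝ} (ht : 0 ≤ t) : 0 ≤ Real.tanh t := by
  rw [Real.tanh_eq_sinh_div_cosh]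
  exact div_nonneg (Real.sinh_nonneg_iff.2 ht) (Real.cosh_pos t).le

lemma myHasDerivAt_tanh (t : ℝ) : HasDerivAt Real.tanh ((Real.cosh t ^ 2)⁻¹) t := by
  have h := (Real.hasDerivAt_sinh t).div (Real.hasDerivAt_cosh t) (Real.cosh_pos t).ne'
  have e : Real.tanh = fun t => Real.sinh t / Real.cosh t :=
    funext Real.tanh_eq_sinh_div_cosh
  rw [e]
  refine h.congr_deriv ?_
  have := Real.cosh_sq_sub_sinh_sq t
  field_simp
  nlinarith [Real.cosh_pos t]

lemma myTanh_strictMono : StrictMono Real.tanh := by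
  apply strictMono_of_deriv_pos
  intro t
  rw [(myHasDerivAt_tanh t).deriv]
  positivity

lemma myTanh_continuous : Continuous Real.tanh :=
  continuous_iff_continuousAt.2 fun t => (myHasDerivAt_tanh t).continuousAt

lemma myTanh_sub_le {a b : ℝ} (hab : a ≤ b) : Real.tanh b - Real.tanh a ≤ b - a := by
  have h : Monotone (fun t => t - Real.tanh t) := by
    apply monotone_of_deriv_nonneg
    · exact differentiable_id.sub fun t => (myHasDerivAt_tanh t).differentiableAt
    · intro t
      have hd : HasDerivAt (fun t => t - Real.tanh t) (1 - (Real.cosh t ^ 2)⁻¹) t :=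
        (hasDerivAt_id t).sub (myHasDerivAt_tanh t)
      rw [hd.deriv]
      have h1 : 1 ≤ Real.cosh t ^ 2 := by nlinarith [Real.one_le_cosh t]
      have h2 : (Real.cosh t ^ 2)⁻¹ ≤ 1 := inv_le_one_of_one_le₀ h1
      linarith
  have := h hab
  simp only at this
  linarith

lemma myOne_sub_tanh_le {t : ℝ} (ht : 0 ≤ t) : 1 - Real.tanh t ≤ 2 * Real.exp (-(2*t)) := by
  have hc : Real.cosh t > 0 := Real.cosh_pos t
  have h1 : 1 - Real.tanh t = Real.exp (-t) / Real.cosh t := by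
    rw [Real.tanh_eq_sinh_div_cosh, ← Real.cosh_sub_sinh t]
    field_simp
  rw [h1]
  have h2 : Real.exp t / 2 ≤ Real.cosh t := by
    rw [Real.cosh_eq]
    have := Real.exp_pos (-t); linarith
  rw [div_le_iff₀ hc, show -(2*t) = -t + -t by ring, Real.exp_add]
  have h3 : Real.exp (-t) * Real.exp t = 1 := by rw [← Real.exp_add]; simp
  nlinarith [Real.exp_pos (-t), Real.exp_pos t]

lemma myTanh_tendsto : Tendsto Real.tanh atTop (nhds 1) := by
  have h0 : Tendsto (fun t : ℝ => 1 - 2 * Real.exp (-(2*t))) atTop (nhds 1) := by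
    have h1 : Tendsto (fun t : ℝ => -(2*t)) atTop atBot := by
      apply tendsto_neg_atTop_atBot.comp
      exact (tendsto_id (α := ℝ)).const_mul_atTop two_pos
    have h2 := Real.tendsto_exp_atBot.comp h1
    have h3 := h2.const_mul (2:ℝ)
    simpa using (tendsto_const_nhds (x := (1:ℝ))).sub h3
  apply tendsto_of_tendsto_of_tendsto_of_le_of_le' h0 tendsto_const_nhds
  · filter_upwards [eventually_ge_atTop (0:ℝ)] with t ht
    linarith [myOne_sub_tanh_le ht]
  · filter_upwards with t
    exact (myTanh_lt_one t).le

lemma myExp_half_le_cosh (t : ℝ) : Real.exp t / 2 ≤ Real.cosh t := by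
  rw [Real.cosh_eq]
  have := Real.exp_pos (-t); linarith

lemma mySechSq_integral {u : ℝ} (hu : 0 < u) :
    ∫ s in Ioi (0:ℝ), (1/2) * ((Real.cosh (u*s/2))^2)⁻¹ = u⁻¹ := by
  have hderiv : ∀ s ∈ Ici (0:ℝ), HasDerivAt (fun s => Real.tanh (u*s/2) / u)
      ((1/2) * ((Real.cosh (u*s/2))^2)⁻¹) s := by
    intro s _
    have h1 : HasDerivAt (fun s : ℝ => u*s/2) (u/2) s := by
      simpa using ((hasDerivAt_id s).const_mul u).div_const 2
    have h2 := ((myHasDerivAt_tanh (u*s/2)).comp s h1).div_const u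
    refine h2.congr_deriv ?_
    field_simp
  have hpos : ∀ s ∈ Ioi (0:ℝ), 0 ≤ (1/2) * ((Real.cosh (u*s/2))^2)⁻¹ := by
    intro s _; positivity
  have htop : Tendsto (fun s : ℝ => u*s/2) atTop atTop :=
    (tendsto_id.const_mul_atTop hu).atTop_div_const two_pos
  have htends : Tendsto (fun s => Real.tanh (u*s/2) / u) atTop (nhds (1/u)) :=
    (myTanh_tendsto.comp htop).div_const u
  have h := integral_Ioi_of_hasDerivAt_of_nonneg' hderiv hpos htends
  simp only [mul_zero, zero_div, Real.tanh_zero] at h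
  rw [h]; simp [one_div]

lemma myPhi_repr {c s : ℝ} (hs : 0 < s) :
    (Real.tanh (c*s/2) - Real.tanh (s/2))/s
      = ∫ u in (1:ℝ)..c, (1/2) * ((Real.cosh (u*s/2))^2)⁻¹ := by
  have hderiv : ∀ u ∈ uIcc (1:ℝ) c, HasDerivAt (fun u => Real.tanh (u*s/2))
      ((s/2) * ((Real.cosh (u*s/2))^2)⁻¹) u := by
    intro u _
    have h1 : HasDerivAt (fun u : ℝ => u*s/2) (s/2) u := by
      simpa using ((hasDerivAt_id u).mul_const s).div_const 2
    have h2 := (myHasDerivAt_tanh (u*s/2)).comp u h1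
    refine h2.congr_deriv ?_; ring
  have hint : IntervalIntegrable (fun u => (s/2) * ((Real.cosh (u*s/2))^2)⁻¹) volume 1 c := by
    apply Continuous.intervalIntegrable
    apply continuous_const.mul
    apply Continuous.inv₀
    · exact (Real.continuous_cosh.comp (by continuity)).pow 2
    · intro z; positivity
  have h := intervalIntegral.integral_eq_sub_of_hasDerivAt hderiv hint
  have e : ∀ u : ℝ, (1/2) * ((Real.cosh (u*s/2))^2)⁻¹
      = (1/s) * ((s/2) * ((Real.cosh (u*s/2))^2)⁻¹) := by
    intro u; field_simp
  simp only [e]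
  rw [intervalIntegral.integral_const_mul, h]
  simp only [one_mul]
  field_simp

lemma myFrullani_ge_one {c : ℝ} (hc : 1 ≤ c) :
    IntegrableOn (fun s => (Real.tanh (c*s/2) - Real.tanh (s/2))/s) (Ioi (0:ℝ)) ∧
    ∫ s in Ioi (0:ℝ), (Real.tanh (c*s/2) - Real.tanh (s/2))/s = Real.log c := by
  set G : ℝ × ℝ → ℝ := fun z => (1/2) * ((Real.cosh (z.2*z.1/2))^2)⁻¹ with hG
  set μ := volume.restrict (Ioi (0:ℝ))
  set ν := volume.restrict (Ioc (1:ℝ) c)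
  have hGcont : Continuous G := by
    apply continuous_const.mul
    apply Continuous.inv₀
    · exact (Real.continuous_cosh.comp (by continuity)).pow 2
    · intro z; positivity
  have hmaj : Integrable (fun z : ℝ × ℝ => 2 * Real.exp (-z.1)) (μ.prod ν) := by
    have h1 : Integrable (fun s : ℝ => 2 * Real.exp (-s)) μ := by
      have := (exp_neg_integrableOn_Ioi 0 (one_pos)).const_mul 2
      simpa using this
    have h2 : Integrable (fun _ : ℝ => (1:ℝ)) ν := by
      refine integrableOn_const ?_
      exact measure_Ioc_lt_top.ne
    simpa using h1.mul_prod h2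
  have hbound : ∀ᵐ z ∂(μ.prod ν), ‖G z‖ ≤ 2 * Real.exp (-z.1) := by
    rw [Measure.prod_restrict]
    rw [ae_restrict_iff' (measurableSet_Ioi.prod measurableSet_Ioc)]
    filter_upwards with z hz
    obtain ⟨hs, hu⟩ := hz
    have hs0 : (0:ℝ) < z.1 := hs
    have hu1 : (1:ℝ) ≤ z.2 := hu.1.le
    set t := z.2 * z.1 / 2 with hts
    have ht : z.1/2 ≤ t := by
      rw [hts]; nlinarith
    have h1 : Real.exp t / 2 ≤ Real.cosh t := myExp_half_le_cosh t
    have h2 : ((Real.cosh t)^2)⁻¹ ≤ ((Real.exp t / 2)^2)⁻¹ :=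
      inv_anti₀ (by positivity) (by nlinarith [Real.cosh_pos t, Real.exp_pos t])
    have h3 : ((Real.exp t / 2)^2)⁻¹ = 4 * Real.exp (-(2*t)) := by
      rw [show -(2*t) = -t + -t by ring, Real.exp_add, Real.exp_neg t]
      have := Real.exp_pos t
      field_simp
      ring
    have h4 : Real.exp (-(2*t)) ≤ Real.exp (-z.1) := by
      apply Real.exp_le_exp.2
      rw [hts]; nlinarith
    have hnorm : ‖G z‖ = G z := Real.norm_of_nonneg (by rw [hG]; positivity)
    rw [hnorm, hG]
    simp only
    calc (1/2) * ((Real.cosh (z.2*z.1/2))^2)⁻¹ ≤ (1/2) * (4 * Real.exp (-(2*t))) := by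
          rw [← hts]  -- t is defeq
          nlinarith [h2, h3.le, h3.ge]
      _ = 2 * Real.exp (-(2*t)) := by ring
      _ ≤ 2 * Real.exp (-z.1) := by linarith
  have hGint : Integrable G (μ.prod ν) :=
    Integrable.mono' hmaj (hGcont.aestronglyMeasurable) hbound
  have hswap := integral_integral_swap (f := fun s u => (1/2) * ((Real.cosh (u*s/2))^2)⁻¹)
    (μ := μ) (ν := ν) hGint
  have hright : ∫ u, (∫ s, (1/2) * ((Real.cosh (u*s/2))^2)⁻¹ ∂μ) ∂ν = Real.log c := by
    rw [show (∫ u, (∫ s, (1/2) * ((Real.cosh (u*s/2))^2)⁻¹ ∂μ) ∂ν)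
        = ∫ u in Ioc (1:ℝ) c, (∫ s in Ioi (0:ℝ), (1/2) * ((Real.cosh (u*s/2))^2)⁻¹) from rfl]
    rw [setIntegral_congr_fun measurableSet_Ioc
      (fun u hu => mySechSq_integral (lt_trans one_pos hu.1))]
    rw [← intervalIntegral.integral_of_le hc]
    rw [integral_inv (by
      intro h
      have := Set.mem_uIcc.1 h
      rcases this with ⟨h1,_⟩|⟨_,h2⟩ <;> linarith)]
    simp
  have hphiae : ∀ s ∈ Ioi (0:ℝ),
      (fun s => ∫ u, (1/2) * ((Real.cosh (u*s/2))^2)⁻¹ ∂ν) s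
        = (Real.tanh (c*s/2) - Real.tanh (s/2))/s := by
    intro s hs
    show (∫ u in Ioc (1:ℝ) c, (1/2) * ((Real.cosh (u*s/2))^2)⁻¹) = _
    rw [← intervalIntegral.integral_of_le hc, ← myPhi_repr hs]
  constructor
  · have h1 : Integrable (fun s => ∫ u, (1/2) * ((Real.cosh (u*s/2))^2)⁻¹ ∂ν) μ :=
      hGint.integral_prod_left
    apply h1.congr
    have hae : ∀ᵐ s ∂μ, s ∈ Ioi (0:ℝ) := ae_restrict_mem measurableSet_Ioi
    filter_upwards [hae] with s hs
    exact hphiae s hs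
  · rw [← hright, ← hswap]
    apply setIntegral_congr_fun measurableSet_Ioi
    intro s hs
    exact (hphiae s hs).symm

lemma myFrullani {c : ℝ} (hc : 0 < c) :
    IntegrableOn (fun s => (Real.tanh (c*s/2) - Real.tanh (s/2))/s) (Ioi (0:ℝ)) ∧
    ∫ s in Ioi (0:ℝ), (Real.tanh (c*s/2) - Real.tanh (s/2))/s = Real.log c := by
  rcases le_or_gt 1 c with h1 | h1
  · exact myFrullani_ge_one h1
  · have hcinv : (0:ℝ) < c⁻¹ := inv_pos.2 hc
    have hd : 1 ≤ c⁻¹ := by nlinarith [mul_inv_cancel₀ hc.ne']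
    obtain ⟨hint, hval⟩ := myFrullani_ge_one hd
    set ψ : ℝ → ℝ := fun t => (Real.tanh (c⁻¹*t/2) - Real.tanh (t/2))/t with hψ
    have hcomp : ∀ s ∈ Ioi (0:ℝ),
        (Real.tanh (c*s/2) - Real.tanh (s/2))/s = -c * ψ (c*s) := by
      intro s hs
      have hs0 : (0:ℝ) < s := hs
      rw [hψ]
      simp only
      rw [show c⁻¹*(c*s) = s by field_simp]
      field_simp
      ring
    have h2 : IntegrableOn (fun s => ψ (c*s)) (Ioi (0:ℝ)) := by
      have := (integrableOn_Ioi_comp_mul_left_iff ψ 0 hc).2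
      simp only [mul_zero] at this
      exact this hint
    constructor
    · have h3 := h2.const_mul (-c)
      apply h3.congr
      have hae : ∀ᵐ s ∂(volume.restrict (Ioi (0:ℝ))), s ∈ Ioi (0:ℝ) :=
        ae_restrict_mem measurableSet_Ioi
      filter_upwards [hae] with s hs
      exact (hcomp s hs).symm
    · rw [setIntegral_congr_fun measurableSet_Ioi hcomp]
      rw [integral_const_mul]
      have h4 := integral_comp_mul_left_Ioi ψ 0 hc
      simp only [mul_zero] at h4
      rw [h4, hval, smul_eq_mul, Real.log_inv]
      field_simp


lemma myJintegrand_bound {x y s : ℝ} (hx : 0 < x) (hy0 : 0 ≤ y) (hy1 : y ≤ 1) (hs : 0 < s) :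
    |thQ (Real.sqrt (x^2+s^2)) (2*y) / Real.sqrt (x^2+s^2) - Real.tanh (s/2)/s|
      ≤ 2/x * Real.exp (-s) + max 1 (x^2) * (1+s^2)⁻¹ := by
  set R := Real.sqrt (x^2+s^2) with hR
  have hRnn : 0 ≤ R := Real.sqrt_nonneg _
  have hR2 : R^2 = x^2+s^2 := Real.sq_sqrt (by positivity)
  have hRx : x ≤ R := by nlinarith
  have hRs : s ≤ R := by nlinarith
  have hRpos : 0 < R := lt_of_lt_of_le hx hRx
  set T := thQ R (2*y) with hT
  have htnn : 0 ≤ Real.tanh (s/2) := myTanh_nonneg (by positivity)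
  have hts : Real.tanh (s/2) ≤ s/2 := by
    have := myTanh_sub_le (a := 0) (b := s/2) (by positivity)
    simpa using this
  have hT1 : T ≤ 1 := by
    rw [hT]; unfold thQ; split
    · exact le_refl _
    · exact (myTanh_lt_one _).le
  have hTlow : Real.tanh (s/2) ≤ T := by
    rw [hT]; unfold thQ; split
    · exact (myTanh_lt_one _).le
    · rename_i hy
      apply myTanh_strictMono.monotone
      have hy' : 0 < y := by
        rcases hy0.lt_or_eq with h | h
        · exact h
        · exact absurd (by rw [← h]; ring) hy
      calc s/2 ≤ R/2 := by linarith
        _ ≤ R/(2*y) := by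
            apply div_le_div_of_nonneg_left hRnn (by linarith) (by linarith)
  have key : T / R - Real.tanh (s/2)/s
      = (T - Real.tanh (s/2))/R - Real.tanh (s/2) * (1/s - 1/R) := by
    field_simp
    ring
  have hAnn : 0 ≤ (T - Real.tanh (s/2))/R := by
    apply div_nonneg _ hRnn; linarith
  have hBnn : 0 ≤ Real.tanh (s/2) * (1/s - 1/R) := by
    apply mul_nonneg htnn
    have : 1/R ≤ 1/s := by
      apply div_le_div_of_nonneg_left one_pos.le hs hRs
    linarith
  have hA : (T - Real.tanh (s/2))/R ≤ 2/x * Real.exp (-s) := by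
    have h1 : T - Real.tanh (s/2) ≤ 2 * Real.exp (-s) := by
      have h2 := myOne_sub_tanh_le (t := s/2) (by positivity)
      rw [show -(2*(s/2)) = -s by ring] at h2
      linarith
    calc (T - Real.tanh (s/2))/R ≤ 2 * Real.exp (-s) / x :=
          div_le_div₀ (by positivity) h1 hx hRx
      _ = 2/x * Real.exp (-s) := by ring
  have hB : Real.tanh (s/2) * (1/s - 1/R) ≤ max 1 (x^2) * (1+s^2)⁻¹ := by
    have e1 : 1/s - 1/R = (R - s)/(s*R) := by field_simp
    have e2 : R - s ≤ x^2/R := by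
      rw [le_div_iff₀ hRpos]
      nlinarith
    have e3 : Real.tanh (s/2) * ((R - s)/(s*R)) ≤ (s/2) * ((x^2/R)/(s*R)) := by
      apply mul_le_mul hts ?_ (div_nonneg (by linarith) (by positivity)) (by positivity)
      gcongr
    have e5 : x^2/(2*R^2) ≤ max 1 (x^2) * (1+s^2)⁻¹ := by
      rw [hR2, ← one_div, mul_one_div, div_le_div_iff₀ (by positivity) (by positivity)]
      rcases le_total (x^2) 1 with h | h
      · rw [max_eq_left h]; nlinarith
      · rw [max_eq_right h]; nlinarith
    calc Real.tanh (s/2) * (1/s - 1/R)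
        = Real.tanh (s/2) * ((R - s)/(s*R)) := by rw [e1]
      _ ≤ (s/2) * ((x^2/R)/(s*R)) := e3
      _ = x^2/(2*R^2) := by field_simp
      _ ≤ max 1 (x^2) * (1+s^2)⁻¹ := e5
  calc |T / R - Real.tanh (s/2)/s|
      ≤ |(T - Real.tanh (s/2))/R| + |Real.tanh (s/2) * (1/s - 1/R)| := by
        rw [key]; exact abs_sub _ _
    _ = (T - Real.tanh (s/2))/R + Real.tanh (s/2) * (1/s - 1/R) := by
        rw [abs_of_nonneg hAnn, abs_of_nonneg hBnn]
    _ ≤ 2/x * Real.exp (-s) + max 1 (x^2) * (1+s^2)⁻¹ := add_le_add hA hB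

lemma myJintegrand_integrable {x y : ℝ} (hx : 0 < x) (hy0 : 0 ≤ y) (hy1 : y ≤ 1) :
    IntegrableOn (fun ε => thQ (Real.sqrt (x ^ 2 + ε ^ 2)) (2 * y) / Real.sqrt (x ^ 2 + ε ^ 2)
      - Real.tanh (ε / 2) / ε) (Ioi (0:ℝ)) := by
  have hmaj : IntegrableOn
      (fun s => 2/x * Real.exp (-s) + max 1 (x^2) * (1+s^2)⁻¹) (Ioi (0:ℝ)) := by
    apply Integrable.add
    · have := (exp_neg_integrableOn_Ioi 0 one_pos).const_mul (2/x)
      simpa using this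
    · exact (integrable_inv_one_add_sq.integrableOn).const_mul _
  apply Integrable.mono' hmaj
  · apply ContinuousOn.aestronglyMeasurable _ measurableSet_Ioi
    have hsq : ContinuousOn (fun ε : ℝ => Real.sqrt (x ^ 2 + ε ^ 2)) (Ioi 0) :=
      (Real.continuous_sqrt.comp (by continuity)).continuousOn
    have hsqne : ∀ s ∈ Ioi (0:ℝ), Real.sqrt (x ^ 2 + s ^ 2) ≠ 0 := by
      intro s _
      exact (Real.sqrt_pos.2 (by positivity)).ne'
    apply ContinuousOn.sub
    · rcases eq_or_ne y 0 with hy | hy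
      · have : ∀ s : ℝ, thQ (Real.sqrt (x ^ 2 + s ^ 2)) (2 * y) = 1 := by
          intro s; unfold thQ; rw [if_pos (by rw [hy]; ring)]
        simp only [this]
        exact ContinuousOn.div continuousOn_const hsq hsqne
      · have h2y : 2*y ≠ 0 := mul_ne_zero two_ne_zero hy
        have : ∀ s : ℝ, thQ (Real.sqrt (x ^ 2 + s ^ 2)) (2 * y)
            = Real.tanh (Real.sqrt (x ^ 2 + s ^ 2) / (2*y)) := by
          intro s; unfold thQ; rw [if_neg h2y]
        simp only [this]
        exact ContinuousOn.div
          (myTanh_continuous.comp_continuousOn (hsq.div_const _)) hsq hsqne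
    · exact ContinuousOn.div
        (myTanh_continuous.comp (continuous_id.div_const 2)).continuousOn continuousOn_id
        (fun s hs => ne_of_gt hs)
  · filter_upwards [ae_restrict_mem measurableSet_Ioi] with s hs
    have := myJintegrand_bound hx hy0 hy1 hs
    simpa [Real.norm_eq_abs] using this

lemma myJfun_scale {x y c : ℝ} (hx : 0 < x) (hy0 : 0 ≤ y) (hy1 : y ≤ 1) (hc : 0 < c) :
    Jfun (c*x) (c*y) = Jfun x y - Real.log c := by
  unfold Jfun
  set F : ℝ → ℝ := fun ε => thQ (Real.sqrt ((c*x) ^ 2 + ε ^ 2)) (2 * (c*y))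
      / Real.sqrt ((c*x) ^ 2 + ε ^ 2) - Real.tanh (ε / 2) / ε with hF
  have h0 := integral_comp_mul_left_Ioi F 0 hc
  simp only [mul_zero] at h0
  have key : ∀ s ∈ Ioi (0:ℝ), F (c*s)
      = c⁻¹ * ((thQ (Real.sqrt (x ^ 2 + s ^ 2)) (2 * y) / Real.sqrt (x ^ 2 + s ^ 2)
            - Real.tanh (s / 2) / s)
          - (Real.tanh (c*s/2) - Real.tanh (s/2))/s) := by
    intro s hs
    have hs0 : (0:ℝ) < s := hs
    have hRpos : 0 < Real.sqrt (x ^ 2 + s ^ 2) := Real.sqrt_pos.2 (by positivity)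
    have hsqrt : Real.sqrt ((c*x) ^ 2 + (c*s) ^ 2) = c * Real.sqrt (x ^ 2 + s ^ 2) := by
      rw [show (c*x) ^ 2 + (c*s) ^ 2 = c^2 * (x ^ 2 + s ^ 2) by ring,
        Real.sqrt_mul (by positivity), Real.sqrt_sq hc.le]
    have hth : thQ (c * Real.sqrt (x ^ 2 + s ^ 2)) (2 * (c*y))
        = thQ (Real.sqrt (x ^ 2 + s ^ 2)) (2 * y) := by
      unfold thQ
      rcases eq_or_ne y 0 with hy | hy
      · rw [if_pos (by rw [hy]; ring), if_pos (by rw [hy]; ring)]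
      · rw [if_neg (by simp [hc.ne', hy]), if_neg (mul_ne_zero two_ne_zero hy)]
        congr 1
        field_simp
    rw [hF]
    simp only
    rw [hsqrt, hth]
    field_simp
    ring
  have h1 : ∫ s in Ioi (0:ℝ), F (c*s)
      = c⁻¹ * ((∫ s in Ioi (0:ℝ), (thQ (Real.sqrt (x ^ 2 + s ^ 2)) (2 * y)
            / Real.sqrt (x ^ 2 + s ^ 2) - Real.tanh (s / 2) / s)) - Real.log c) := by
    rw [setIntegral_congr_fun measurableSet_Ioi key, integral_const_mul]
    congr 1
    rw [integral_sub (myJintegrand_integrable hx hy0 hy1) (myFrullani hc).1,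
      (myFrullani hc).2]
  have h2 : (∫ ε in Ioi (0:ℝ), F ε) = c * ∫ s in Ioi (0:ℝ), F (c*s) := by
    rw [h0, smul_eq_mul]
    field_simp
  calc (∫ ε in Ioi (0:ℝ), F ε) = c * ∫ s in Ioi (0:ℝ), F (c*s) := h2
    _ = (∫ s in Ioi (0:ℝ), (thQ (Real.sqrt (x ^ 2 + s ^ 2)) (2 * y)
          / Real.sqrt (x ^ 2 + s ^ 2) - Real.tanh (s / 2) / s)) - Real.log c := by
        rw [h1]
        field_simp

/-- Lemma 6.7: the identity `x = f_BCS(e^{J(x,y)} y) e^{-J(x,y)}` whenever `e^{J(x,y)} y < 1`. -/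
theorem fBCS_J_identity (fBCS : ℝ → ℝ) (hf : IsBCS fBCS) :
    ∀ x : ℝ, 0 < x → ∀ y ∈ Set.Icc (0:ℝ) 1,
      Real.exp (Jfun x y) * y < 1 →
      x = fBCS (Real.exp (Jfun x y) * y) * Real.exp (-(Jfun x y)) := by
  intro x hx y hy hlt
  obtain ⟨hy0, hy1⟩ := hy
  set J := Jfun x y with hJ
  set c := Real.exp J with hc
  have hcpos : 0 < c := Real.exp_pos J
  have hJ0 : Jfun (c*x) (c*y) = 0 := by
    rw [myJfun_scale hx hy0 hy1 hcpos, hc, Real.log_exp, ← hJ, sub_self]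
  have hmem : c*y ∈ Set.Ico (0:ℝ) 1 := ⟨by positivity, hlt⟩
  obtain ⟨hpos, hzero, huniq⟩ := hf (c*y) hmem
  have heq : c*x = fBCS (c*y) := huniq (c*x) (by positivity) hJ0
  rw [Real.exp_neg, ← hc, ← heq]
  field_simp
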